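/- Let α be a real quadratic irrational and β an irrational real number. Suppose there exists m ∈ ℕ such that for every natural number n with n ≥ m and n ≥ 1 there exist integers i, j, k, l with |i·l − j·k| = 1 and (i·(n·α) + j)/(k·(n·α) + l) = n·β. Then there exists a rational number q with α = β + q or α = −β + q. -/

import Mathlib

lemma lin_zero {x : ℝ} (hx : Irrational x) {p q : ℤ}
    (h : (p:ℝ) * x + (q:ℝ) = 0) : p = 0 ∧ q = 0 := by
  rcases eq_or_ne p 0 with hp | hp
  · subst hp
    simp only [Int.cast_zero, zero_mul, zero_add] at h
    exact ⟨rfl, by exact_mod_cast h⟩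
  · exfalso
    apply hx ⟨(-q : ℚ)/(p:ℚ), ?_⟩
    have hp' : (p:ℝ) ≠ 0 := Int.cast_ne_zero.2 hp
    push_cast
    field_simp
    linarith

lemma lead_ne_zero {x : ℝ} (hx : Irrational x) {a b c : ℤ}
    (hf : (a:ℝ)*x^2 + (b:ℝ)*x + (c:ℝ) = 0) (hnt : ¬(a = 0 ∧ b = 0 ∧ c = 0)) :
    a ≠ 0 := by
  intro ha
  subst ha
  simp only [Int.cast_zero, zero_mul, zero_add] at hf
  obtain ⟨hb, hc⟩ := lin_zero hx hf
  exact hnt ⟨rfl, hb, hc⟩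

lemma disc_ne_zero {x : ℝ} (hx : Irrational x) {a b c : ℤ}
    (hf : (a:ℝ)*x^2 + (b:ℝ)*x + (c:ℝ) = 0) (hnt : ¬(a = 0 ∧ b = 0 ∧ c = 0)) :
    b^2 - 4*a*c ≠ 0 := by
  intro hD
  have ha : a ≠ 0 := lead_ne_zero hx hf hnt
  have hD' : ((b:ℝ))^2 - 4*a*c = 0 := by exact_mod_cast congrArg (Int.cast : ℤ → ℝ) hD
  have hsq : ((2*a:ℤ):ℝ) * x + (b:ℝ) = 0 := by
    have h2 : (((2*a:ℤ):ℝ) * x + (b:ℝ))^2 = 0 := by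
      push_cast
      linear_combination (4*(a:ℝ))*hf + hD'
    have := pow_eq_zero_iff (n := 2) (by norm_num) |>.mp h2
    linarith [this]
  obtain ⟨h1, _⟩ := lin_zero hx hsq
  exact ha (by omega)

lemma mult_of_prim {x : ℝ} (hx : Irrational x) {a b c A B C : ℤ}
    (hf : (a:ℝ)*x^2 + (b:ℝ)*x + (c:ℝ) = 0) (hnt : ¬(a = 0 ∧ b = 0 ∧ c = 0))
    (hprim : Int.gcd a (Int.gcd b c) = 1)
    (hF : (A:ℝ)*x^2 + (B:ℝ)*x + (C:ℝ) = 0) :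
    ∃ t : ℤ, A = t*a ∧ B = t*b ∧ C = t*c := by
  have ha : a ≠ 0 := lead_ne_zero hx hf hnt
  have hcross : ((a*B - A*b : ℤ):ℝ) * x + ((a*C - A*c : ℤ):ℝ) = 0 := by
    push_cast
    linear_combination (a:ℝ) * hF - (A:ℝ) * hf
  obtain ⟨h1, h2⟩ := lin_zero hx hcross
  have hb : A * b = a * B := by omega
  have hc : A * c = a * C := by omega
  -- a ∣ A
  have d1 : a ∣ A * b := ⟨B, hb⟩
  have d2 : a ∣ A * c := ⟨C, hc⟩
  have d3 : a ∣ (Int.gcd (A*b) (A*c) : ℤ) := Int.dvd_coe_gcd d1 d2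
  rw [Int.gcd_mul_left, Nat.cast_mul] at d3
  have d4 : a ∣ A * (Int.gcd b c : ℤ) := by
    rcases Int.natAbs_eq A with hA | hA
    · rw [hA]; exact_mod_cast d3
    · rw [hA, neg_mul]; exact dvd_neg.mpr (by exact_mod_cast d3)
  have d5 : a ∣ A * a := ⟨A, mul_comm A a⟩
  have d6 : a ∣ (Int.gcd (A*a) (A*(Int.gcd b c : ℤ)) : ℤ) := Int.dvd_coe_gcd d5 d4
  rw [Int.gcd_mul_left, hprim, Nat.mul_one] at d6
  have dA : a ∣ A := Int.dvd_natAbs.mp d6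
  obtain ⟨t, ht⟩ := dA
  refine ⟨t, by rw [ht]; ring, ?_, ?_⟩
  · have : a * B = a * (t * b) := by rw [← hb, ht]; ring
    exact mul_left_cancel₀ ha this
  · have : a * C = a * (t * c) := by rw [← hc, ht]; ring
    exact mul_left_cancel₀ ha this

lemma exists_prim {x : ℝ} {A B C : ℤ}
    (hF : (A:ℝ)*x^2 + (B:ℝ)*x + (C:ℝ) = 0) (hnt : ¬(A = 0 ∧ B = 0 ∧ C = 0)) :
    ∃ a b c : ℤ, ((a:ℝ)*x^2 + (b:ℝ)*x + (c:ℝ) = 0) ∧ ¬(a = 0 ∧ b = 0 ∧ c = 0) ∧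
      Int.gcd a (Int.gcd b c) = 1 := by
  set g : ℕ := Int.gcd A (Int.gcd B C) with hg
  have hgA : (g:ℤ) ∣ A := Int.gcd_dvd_left _ _
  have hgBC : (g:ℤ) ∣ (Int.gcd B C : ℤ) := Int.gcd_dvd_right _ _
  have hgB : (g:ℤ) ∣ B := hgBC.trans (Int.gcd_dvd_left _ _)
  have hgC : (g:ℤ) ∣ C := hgBC.trans (Int.gcd_dvd_right _ _)
  have hgne : g ≠ 0 := by
    intro h0
    rw [hg] at h0
    have := Int.gcd_eq_zero_iff.mp h0
    obtain ⟨hA0, h1⟩ := this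
    have := Int.gcd_eq_zero_iff.mp (by exact_mod_cast h1)
    exact hnt ⟨hA0, this.1, this.2⟩
  obtain ⟨a, hA⟩ := hgA
  obtain ⟨b, hB⟩ := hgB
  obtain ⟨c, hC⟩ := hgC
  have hgz : ((g:ℤ):ℝ) ≠ 0 := by exact_mod_cast Nat.cast_ne_zero.mpr hgne
  refine ⟨a, b, c, ?_, ?_, ?_⟩
  · have : ((g:ℤ):ℝ) * ((a:ℝ)*x^2 + (b:ℝ)*x + (c:ℝ)) = 0 := by
      rw [hA, hB, hC] at hF
      push_cast at hF ⊢
      linear_combination hF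
    rcases mul_eq_zero.mp this with h | h
    · exact absurd h hgz
    · exact h
  · rintro ⟨ha0, hb0, hc0⟩
    exact hnt ⟨by rw [hA, ha0, mul_zero], by rw [hB, hb0, mul_zero], by rw [hC, hc0, mul_zero]⟩
  · have key : g * Int.gcd a (Int.gcd b c) = g := by
      have h1 : Int.gcd B C = g * Int.gcd b c := by
        rw [hB, hC, Int.gcd_mul_left, Int.natAbs_natCast]
      have h2 : Int.gcd A ((g:ℤ) * (Int.gcd b c : ℤ)) = g * Int.gcd a (Int.gcd b c) := by
        rw [hA, Int.gcd_mul_left, Int.natAbs_natCast]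
      calc g * Int.gcd a (Int.gcd b c) = Int.gcd A ((g:ℤ) * (Int.gcd b c : ℤ)) := h2.symm
        _ = Int.gcd A (Int.gcd B C) := by rw [h1]; push_cast; ring_nf
        _ = g := hg.symm
    have : g * Int.gcd a (Int.gcd b c) = g * 1 := by rw [key, Nat.mul_one]
    exact Nat.eq_of_mul_eq_mul_left (Nat.pos_of_ne_zero hgne) this

lemma disc_mul_sq {x y : ℝ} (hy : Irrational y)
    {i j k l : ℤ} (hdet : |i*l - j*k| = 1)
    (hxy : x * ((k:ℝ)*y - (i:ℝ)) = (j:ℝ) - (l:ℝ)*y)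
    {a b c a' b' c' : ℤ}
    (hf : (a:ℝ)*x^2 + (b:ℝ)*x + (c:ℝ) = 0)
    (hf' : (a':ℝ)*y^2 + (b':ℝ)*y + (c':ℝ) = 0) (hnt' : ¬(a' = 0 ∧ b' = 0 ∧ c' = 0))
    (hprim' : Int.gcd a' (Int.gcd b' c') = 1) :
    ∃ t : ℤ, b^2 - 4*a*c = t^2 * (b'^2 - 4*a'*c') := by
  set A2 : ℤ := a*l^2 - b*l*k + c*k^2 with hA2
  set B2 : ℤ := -2*a*j*l + b*(i*l + j*k) - 2*c*i*k with hB2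
  set C2 : ℤ := a*j^2 - b*i*j + c*i^2 with hC2
  have hF : (A2:ℝ)*y^2 + (B2:ℝ)*y + (C2:ℝ) = 0 := by
    rw [hA2, hB2, hC2]
    push_cast
    linear_combination (((k:ℝ)*y - i)^2) * hf +
      (-(a:ℝ)*(((j:ℝ) - (l:ℝ)*y) + x*((k:ℝ)*y - (i:ℝ))) - (b:ℝ)*((k:ℝ)*y - (i:ℝ))) * hxy
  obtain ⟨t, h1, h2, h3⟩ := mult_of_prim hy hf' hnt' hprim' hF
  refine ⟨t, ?_⟩
  have hd1 : (i*l - j*k)^2 = 1 := by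
    have h := sq_abs (i*l - j*k)
    rw [hdet] at h
    omega
  have hdisc : B2^2 - 4*A2*C2 = (i*l - j*k)^2 * (b^2 - 4*a*c) := by
    rw [hA2, hB2, hC2]; ring
  have hdisc2 : B2^2 - 4*A2*C2 = t^2 * (b'^2 - 4*a'*c') := by
    rw [h1, h2, h3]; ring
  rw [hdisc, hd1, one_mul] at hdisc2
  exact hdisc2

lemma denom_ne {x : ℝ} (hx : Irrational x) {k l : ℤ} (hkl : ¬(k = 0 ∧ l = 0)) :
    (k:ℝ)*x + (l:ℝ) ≠ 0 := by
  intro h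
  exact hkl (lin_zero hx h)

lemma disc_eq_of_equiv {x y : ℝ} (hx : Irrational x) (hy : Irrational y)
    {i j k l : ℤ} (hdet : |i*l - j*k| = 1)
    (hrel : ((i:ℝ)*x + (j:ℝ))/((k:ℝ)*x + (l:ℝ)) = y)
    {a b c a' b' c' : ℤ}
    (hf : (a:ℝ)*x^2 + (b:ℝ)*x + (c:ℝ) = 0) (hnt : ¬(a = 0 ∧ b = 0 ∧ c = 0))
    (hprim : Int.gcd a (Int.gcd b c) = 1)
    (hf' : (a':ℝ)*y^2 + (b':ℝ)*y + (c':ℝ) = 0) (hnt' : ¬(a' = 0 ∧ b' = 0 ∧ c' = 0))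
    (hprim' : Int.gcd a' (Int.gcd b' c') = 1) :
    b^2 - 4*a*c = b'^2 - 4*a'*c' := by
  have hkl : ¬(k = 0 ∧ l = 0) := by
    rintro ⟨rfl, rfl⟩
    simp at hdet
  have hden := denom_ne hx hkl
  have heq : (i:ℝ)*x + (j:ℝ) = y * ((k:ℝ)*x + (l:ℝ)) := by
    rw [← hrel]; exact (div_mul_cancel₀ _ hden).symm
  have hxy : x * ((k:ℝ)*y - (i:ℝ)) = (j:ℝ) - (l:ℝ)*y := by linear_combination -heq
  have hyx : y * (((-k:ℤ):ℝ)*x - ((l:ℤ):ℝ)) = ((-j:ℤ):ℝ) - ((i:ℤ):ℝ)*x := by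
    push_cast
    linear_combination heq
  have hdet' : |l*i - (-j)*(-k)| = 1 := by
    rw [show l*i - (-j)*(-k) = i*l - j*k by ring]; exact hdet
  obtain ⟨t, ht⟩ := disc_mul_sq hy hdet hxy hf hf' hnt' hprim'
  obtain ⟨s, hs⟩ := disc_mul_sq hx hdet' hyx hf' hf hnt hprim
  have hD : b^2 - 4*a*c ≠ 0 := disc_ne_zero hx hf hnt
  have hts : t^2 * s^2 = 1 := by
    have h0 : (t^2 * s^2 - 1) * (b^2 - 4*a*c) = 0 := by
      linear_combination (-1 : ℤ)*ht - t^2*hs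
    rcases mul_eq_zero.mp h0 with h | h
    · omega
    · exact absurd h hD
  have ht2 : t^2 = 1 := Int.eq_one_of_mul_eq_one_right (sq_nonneg t) hts
  rw [ht, ht2, one_mul]

lemma prim_scale {a b c n : ℤ} (hprim : Int.gcd a (Int.gcd b c) = 1)
    (hcop : IsCoprime a n) : Int.gcd a (Int.gcd (b*n) (c*n^2)) = 1 := by
  set d := Int.gcd a (Int.gcd (b*n) (c*n^2)) with hd
  have hda : (d:ℤ) ∣ a := Int.gcd_dvd_left _ _
  have hdbc : (d:ℤ) ∣ (Int.gcd (b*n) (c*n^2) : ℤ) := Int.gcd_dvd_right _ _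
  have hdb : (d:ℤ) ∣ b*n := hdbc.trans (Int.gcd_dvd_left _ _)
  have hdc : (d:ℤ) ∣ c*n^2 := hdbc.trans (Int.gcd_dvd_right _ _)
  have hcop_d : IsCoprime ((d:ℤ)) n := IsCoprime.of_isCoprime_of_dvd_left hcop hda
  have hb : (d:ℤ) ∣ b := hcop_d.dvd_of_dvd_mul_right hdb
  have hc : (d:ℤ) ∣ c := (hcop_d.pow_right).dvd_of_dvd_mul_right hdc
  have hfin : (d:ℤ) ∣ (Int.gcd a (Int.gcd b c) : ℤ) := Int.dvd_coe_gcd hda (Int.dvd_coe_gcd hb hc)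
  rw [hprim] at hfin
  have : d ∣ 1 := by exact_mod_cast hfin
  exact Nat.dvd_one.mp this


/-- Two irrational reals are `PGL₂(ℤ)`-equivalent when related by an integral
fractional linear transformation of determinant `±1`. -/
def PGL2ZEquiv (x y : ℝ) : Prop :=
  ∃ i j k l : ℤ, |i * l - j * k| = 1 ∧
    ((i : ℝ) * x + (j : ℝ)) / ((k : ℝ) * x + (l : ℝ)) = y

/-- If a quadratic irrational `α` and an irrational `β` are eventually
`PGL₂(ℤ)`-equivalent, then `α = ±β + q` for some rational `q`. -/

theorem stmt_7 (α β : ℝ) (hα : Irrational α)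
    (hquad : ∃ a b c : ℚ, ¬(a = 0 ∧ b = 0 ∧ c = 0) ∧
      (a : ℝ) * α ^ 2 + (b : ℝ) * α + (c : ℝ) = 0)
    (hβ : Irrational β)
    (hev : ∃ m : ℕ, ∀ n : ℕ, m ≤ n → 1 ≤ n →
      PGL2ZEquiv ((n : ℝ) * α) ((n : ℝ) * β)) :
    ∃ q : ℚ, α = β + (q : ℝ) ∨ α = -β + (q : ℝ) := by
  obtain ⟨m, hev⟩ := hev
  obtain ⟨qa, qb, qc, hqnt, hqeq⟩ := hquad
  -- integer form for α
  obtain ⟨A0, B0, C0, hF0, hnt0⟩ :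
      ∃ A B C : ℤ, ((A:ℝ)*α^2 + (B:ℝ)*α + (C:ℝ) = 0) ∧ ¬(A = 0 ∧ B = 0 ∧ C = 0) := by
    refine ⟨qa.num * (qb.den * qc.den), qb.num * (qa.den * qc.den),
      qc.num * (qa.den * qb.den), ?_, ?_⟩
    · have e1 : ((qa.num:ℝ)) = (qa:ℝ) * (qa.den:ℝ) := by
        rw [Rat.cast_def]; field_simp
      have e2 : ((qb.num:ℝ)) = (qb:ℝ) * (qb.den:ℝ) := by
        rw [Rat.cast_def]; field_simp
      have e3 : ((qc.num:ℝ)) = (qc:ℝ) * (qc.den:ℝ) := by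
        rw [Rat.cast_def]; field_simp
      push_cast
      linear_combination ((qa.den:ℝ)*(qb.den:ℝ)*(qc.den:ℝ)) * hqeq
        + ((qb.den:ℝ)*(qc.den:ℝ)*α^2) * e1 + ((qa.den:ℝ)*(qc.den:ℝ)*α) * e2
        + ((qa.den:ℝ)*(qb.den:ℝ)) * e3
    · rintro ⟨h1, h2, h3⟩
      apply hqnt
      have d1 : qa.num = 0 := by
        have : (qb.den * qc.den : ℤ) ≠ 0 := by positivity
        exact (mul_eq_zero.mp h1).resolve_right (by exact_mod_cast this)
      have d2 : qb.num = 0 := by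
        have : (qa.den * qc.den : ℤ) ≠ 0 := by positivity
        exact (mul_eq_zero.mp h2).resolve_right (by exact_mod_cast this)
      have d3 : qc.num = 0 := by
        have : (qa.den * qb.den : ℤ) ≠ 0 := by positivity
        exact (mul_eq_zero.mp h3).resolve_right (by exact_mod_cast this)
      exact ⟨Rat.num_eq_zero.mp d1, Rat.num_eq_zero.mp d2, Rat.num_eq_zero.mp d3⟩
  obtain ⟨a, b, c, hfa, hnta, hprima⟩ := exists_prim hF0 hnt0
  have ha : a ≠ 0 := lead_ne_zero hα hfa hnta
  have hD : b^2 - 4*a*c ≠ 0 := disc_ne_zero hα hfa hnta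
  -- step 2 : express β over ℚ(α)
  set n₀ : ℕ := max m 1 with hn₀
  have hn₀m : m ≤ n₀ := le_max_left _ _
  have hn₀1 : 1 ≤ n₀ := le_max_right _ _
  obtain ⟨i, j, k, l, hdet, hrel⟩ := hev n₀ hn₀m hn₀1
  have hxirr : Irrational ((n₀:ℝ) * α) := hα.natCast_mul (by omega)
  have hkl : ¬(k = 0 ∧ l = 0) := by
    rintro ⟨rfl, rfl⟩; simp at hdet
  have hden : (k:ℝ)*((n₀:ℝ)*α) + (l:ℝ) ≠ 0 := denom_ne hxirr hkl
  have heq : (i:ℝ)*((n₀:ℝ)*α) + (j:ℝ) = ((n₀:ℝ)*β) * ((k:ℝ)*((n₀:ℝ)*α) + (l:ℝ)) := by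
    rw [← hrel]; exact (div_mul_cancel₀ _ hden).symm
  set ν : ℤ := (n₀ : ℤ) with hν
  have hνcast : ((ν:ℤ):ℝ) = (n₀:ℝ) := by push_cast; rfl
  have hνne : ν ≠ 0 := by positivity
  set e : ℤ := k * ν with he_def
  set f : ℤ := l with hf_def
  set N : ℤ := c*e^2 - b*e*f + a*f^2 with hN_def
  set P : ℤ := a*(i*ν*f - j*e) with hP_def
  set Q : ℤ := i*ν*e*c + j*f*a - j*e*b with hQ_def
  set R : ℤ := ν*N with hR_def
  clear_value e f N P Q R
  have hef : ¬(e = 0 ∧ f = 0) := by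
    rintro ⟨he0, hf0⟩
    rw [he_def] at he0
    exact hkl ⟨by rcases mul_eq_zero.mp he0 with h | h; exact h; exact absurd h hνne, hf0⟩
  have hfac : ((e:ℝ)*α + (f:ℝ)) * (((-(a*e) : ℤ):ℝ)*α + ((a*f - b*e : ℤ):ℝ)) = (N:ℝ) := by
    rw [hN_def]
    push_cast
    linear_combination (-(e:ℝ)^2) * hfa
  have hN : N ≠ 0 := by
    intro hN0
    rw [hN0] at hfac
    push_cast at hfac
    rcases mul_eq_zero.mp hfac with h | h
    · exact denom_ne hα hef (by push_cast; linarith [h])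
    · have := lin_zero hα (p := -(a*e)) (q := a*f - b*e) (by push_cast; linarith [h])
      have he0 : e = 0 := by
        rcases mul_eq_zero.mp (show a*e = 0 by omega) with h' | h'
        · exact absurd h' ha
        · exact h'
      have hf0 : f ≠ 0 := fun h' => hef ⟨he0, h'⟩
      rcases mul_eq_zero.mp (show a*f = 0 by rw [he0] at this; omega) with h' | h'
      · exact ha h'
      · exact hf0 h'
  have hR : R ≠ 0 := by rw [hR_def]; exact mul_ne_zero hνne hN
  have hRr : (R:ℝ) ≠ 0 := Int.cast_ne_zero.2 hR
  have hbeta : (R:ℝ)*β = (P:ℝ)*α + (Q:ℝ) := by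
    rw [hR_def, hN_def, hP_def, hQ_def, he_def]
    push_cast
    linear_combination ((a:ℝ)*(k:ℝ)*(n₀:ℝ)*α - (a:ℝ)*(f:ℝ) + (b:ℝ)*(k:ℝ)*(n₀:ℝ)) * heq
      + (-(i:ℝ)*(n₀:ℝ)^2*(k:ℝ) + β*(n₀:ℝ)^3*(k:ℝ)^2) * hfa
  have hP : P ≠ 0 := by
    intro hP0
    apply hβ ⟨(Q:ℚ)/(R:ℚ), ?_⟩
    rw [hP0] at hbeta
    push_cast at hbeta ⊢
    rw [div_eq_iff (by exact_mod_cast hRr)]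
    linarith [hbeta]
  -- form for β
  set Aβ : ℤ := a*R^2 with hAβ_def
  set Bβ : ℤ := b*P*R - 2*a*Q*R with hBβ_def
  set Cβ : ℤ := a*Q^2 - b*P*Q + c*P^2 with hCβ_def
  clear_value Aβ Bβ Cβ
  have hFβ : (Aβ:ℝ)*β^2 + (Bβ:ℝ)*β + (Cβ:ℝ) = 0 := by
    rw [hAβ_def, hBβ_def, hCβ_def]
    push_cast
    linear_combination ((P:ℝ)^2)*hfa
      + ((a:ℝ)*((R:ℝ)*β - (Q:ℝ)) + (a:ℝ)*(P:ℝ)*α + (b:ℝ)*(P:ℝ)) * hbeta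
  have hntβ : ¬(Aβ = 0 ∧ Bβ = 0 ∧ Cβ = 0) := by
    rintro ⟨h1, _, _⟩
    rw [hAβ_def] at h1
    rcases mul_eq_zero.mp h1 with h | h
    · exact ha h
    · exact hR (by exact pow_eq_zero_iff (n := 2) (by norm_num) |>.mp h)
  obtain ⟨a', b', c', hfb, hntb, hprimb⟩ := exists_prim hFβ hntβ
  have ha' : a' ≠ 0 := lead_ne_zero hβ hfb hntb
  have hD' : b'^2 - 4*a'*c' ≠ 0 := disc_ne_zero hβ hfb hntb
  obtain ⟨t₁, ht1, ht2, ht3⟩ := mult_of_prim hβ hfb hntb hprimb hFβ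
  have hstar : R^2*P^2*(b^2 - 4*a*c) = t₁^2*(b'^2 - 4*a'*c') := by
    have h1 : Bβ^2 - 4*Aβ*Cβ = R^2*P^2*(b^2 - 4*a*c) := by
      rw [hAβ_def, hBβ_def, hCβ_def]; ring
    have h2 : Bβ^2 - 4*Aβ*Cβ = t₁^2*(b'^2 - 4*a'*c') := by
      rw [ht1, ht2, ht3]; ring
    rw [← h1, h2]
  have hstar2 : a*R^2 = t₁*a' := by rw [← hAβ_def]; exact ht1
  -- choose special n's
  set A1 : ℕ := a.natAbs with hA1_def
  set A2 : ℕ := a'.natAbs with hA2_def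
  have hA1pos : 0 < A1 := Int.natAbs_pos.mpr ha
  have hA2pos : 0 < A2 := Int.natAbs_pos.mpr ha'
  have hprod : 1 ≤ A1*A2 := Nat.one_le_iff_ne_zero.mpr (by positivity)
  have hdvd_aN : (a:ℤ) ∣ (((m+1)*(A1*A2) : ℕ) : ℤ) := by
    have h1 : (a:ℤ) ∣ (A1:ℤ) := Int.dvd_natAbs.mpr dvd_rfl
    have h2 : (((m+1)*(A1*A2) : ℕ) : ℤ) = ((m+1 : ℕ):ℤ) * ((A1:ℤ)*(A2:ℤ)) := by push_cast; ring
    rw [h2]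
    exact Dvd.dvd.mul_left (dvd_mul_of_dvd_left h1 _) _
  have hdvd_aN' : (a':ℤ) ∣ (((m+1)*(A1*A2) : ℕ) : ℤ) := by
    have h1 : (a':ℤ) ∣ (A2:ℤ) := Int.dvd_natAbs.mpr dvd_rfl
    have h2 : (((m+1)*(A1*A2) : ℕ) : ℤ) = ((m+1 : ℕ):ℤ) * ((A1:ℤ)*(A2:ℤ)) := by push_cast; ring
    rw [h2]
    exact Dvd.dvd.mul_left (dvd_mul_of_dvd_right h1 _) _
  -- step n₁ : coprime case, gives equality of discriminants
  set n₁ : ℕ := (m+1)*(A1*A2) + 1 with hn₁_def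
  clear_value n₁
  have hmle : m + 1 ≤ (m+1)*(A1*A2) := Nat.le_mul_of_pos_right _ (by omega)
  have hn₁m : m ≤ n₁ := by
    have h2 : (m+1)*(A1*A2) ≤ n₁ := by rw [hn₁_def]; exact Nat.le_succ _
    omega
  have hn₁1 : 1 ≤ n₁ := by rw [hn₁_def]; exact Nat.le_add_left 1 _
  set ν₁ : ℤ := (n₁ : ℤ) with hν₁_def
  clear_value ν₁
  have hν₁ne : ν₁ ≠ 0 := by
    rw [hν₁_def]
    exact Int.natCast_ne_zero.mpr (Nat.one_le_iff_ne_zero.mp hn₁1)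
  have hcopa : IsCoprime (a:ℤ) ν₁ := by
    obtain ⟨w, hw⟩ := hdvd_aN
    refine ⟨-w, 1, ?_⟩
    have hh : ν₁ = (((m+1)*(A1*A2) : ℕ) : ℤ) + 1 := by rw [hν₁_def, hn₁_def]; push_cast; ring
    rw [hh, hw]; ring
  have hcopa' : IsCoprime (a':ℤ) ν₁ := by
    obtain ⟨w, hw⟩ := hdvd_aN'
    refine ⟨-w, 1, ?_⟩
    have hh : ν₁ = (((m+1)*(A1*A2) : ℕ) : ℤ) + 1 := by rw [hν₁_def, hn₁_def]; push_cast; ring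
    rw [hh, hw]; ring
  have hf1 : ((a:ℤ):ℝ)*((n₁:ℝ)*α)^2 + ((b*ν₁ : ℤ):ℝ)*((n₁:ℝ)*α) + ((c*ν₁^2 : ℤ):ℝ) = 0 := by
    rw [hν₁_def]
    push_cast
    linear_combination ((n₁:ℝ)^2) * hfa
  have hnt1 : ¬(a = 0 ∧ b*ν₁ = 0 ∧ c*ν₁^2 = 0) := fun h => ha h.1
  have hprim1 : Int.gcd a (Int.gcd (b*ν₁) (c*ν₁^2)) = 1 := prim_scale hprima hcopa
  have hf1' : ((a':ℤ):ℝ)*((n₁:ℝ)*β)^2 + ((b'*ν₁ : ℤ):ℝ)*((n₁:ℝ)*β) + ((c'*ν₁^2 : ℤ):ℝ) = 0 := by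
    rw [hν₁_def]
    push_cast
    linear_combination ((n₁:ℝ)^2) * hfb
  have hnt1' : ¬(a' = 0 ∧ b'*ν₁ = 0 ∧ c'*ν₁^2 = 0) := fun h => ha' h.1
  have hprim1' : Int.gcd a' (Int.gcd (b'*ν₁) (c'*ν₁^2)) = 1 := prim_scale hprimb hcopa'
  obtain ⟨i₁, j₁, k₁, l₁, hdet₁, hrel₁⟩ := hev n₁ hn₁m hn₁1
  have hxirr₁ : Irrational ((n₁:ℝ)*α) := hα.natCast_mul (by omega)
  have hyirr₁ : Irrational ((n₁:ℝ)*β) := hβ.natCast_mul (by omega)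
  have key₁ := disc_eq_of_equiv hxirr₁ hyirr₁ hdet₁ hrel₁ hf1 hnt1 hprim1 hf1' hnt1' hprim1'
  have hDD' : b^2 - 4*a*c = b'^2 - 4*a'*c' := by
    have hc2 : ν₁^2 * (b^2-4*a*c) = ν₁^2 * (b'^2-4*a'*c') := by linear_combination key₁
    exact mul_left_cancel₀ (pow_ne_zero 2 hν₁ne) hc2
  -- step n₂ : multiple case, gives a² = a'²
  set n₂ : ℕ := (m+1)*(A1*A2) with hn₂_def
  clear_value n₂
  have hn₂m : m ≤ n₂ := by omega
  have hn₂1 : 1 ≤ n₂ := by omega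
  set ν₂ : ℤ := (n₂ : ℤ) with hν₂_def
  clear_value ν₂
  have hν₂ne : ν₂ ≠ 0 := by
    rw [hν₂_def]
    exact_mod_cast Nat.one_le_iff_ne_zero.mp hn₂1
  obtain ⟨e₂, he₂⟩ : (a:ℤ) ∣ ν₂ := hdvd_aN
  obtain ⟨e₂', he₂'⟩ : (a':ℤ) ∣ ν₂ := hdvd_aN'
  have he₂ne : e₂ ≠ 0 := by
    intro h
    rw [h, mul_zero] at he₂
    exact hν₂ne he₂
  have hcast2 : ((n₂:ℕ):ℝ) = (a:ℝ)*(e₂:ℝ) := by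
    rw [hν₂_def] at he₂
    exact_mod_cast congrArg (Int.cast : ℤ → ℝ) he₂
  have hcast2' : ((n₂:ℕ):ℝ) = (a':ℝ)*(e₂':ℝ) := by
    rw [hν₂_def] at he₂'
    exact_mod_cast congrArg (Int.cast : ℤ → ℝ) he₂'
  have hf2 : ((1:ℤ):ℝ)*((n₂:ℝ)*α)^2 + ((b*e₂ : ℤ):ℝ)*((n₂:ℝ)*α) + ((c*e₂*ν₂ : ℤ):ℝ) = 0 := by
    rw [hν₂_def]
    push_cast
    linear_combination ((e₂:ℝ)*(n₂:ℝ))*hfa + (α^2*(n₂:ℝ))*hcast2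
  have hnt2 : ¬((1:ℤ) = 0 ∧ b*e₂ = 0 ∧ c*e₂*ν₂ = 0) := fun h => one_ne_zero h.1
  have hprim2 : Int.gcd 1 (Int.gcd (b*e₂) (c*e₂*ν₂)) = 1 := Int.one_gcd
  have hf2' : ((1:ℤ):ℝ)*((n₂:ℝ)*β)^2 + ((b'*e₂' : ℤ):ℝ)*((n₂:ℝ)*β) + ((c'*e₂'*ν₂ : ℤ):ℝ) = 0 := by
    rw [hν₂_def]
    push_cast
    linear_combination ((e₂':ℝ)*(n₂:ℝ))*hfb + (β^2*(n₂:ℝ))*hcast2'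
  have hnt2' : ¬((1:ℤ) = 0 ∧ b'*e₂' = 0 ∧ c'*e₂'*ν₂ = 0) := fun h => one_ne_zero h.1
  have hprim2' : Int.gcd 1 (Int.gcd (b'*e₂') (c'*e₂'*ν₂)) = 1 := Int.one_gcd
  obtain ⟨i₂, j₂, k₂, l₂, hdet₂, hrel₂⟩ := hev n₂ hn₂m hn₂1
  have hxirr₂ : Irrational ((n₂:ℝ)*α) := hα.natCast_mul (by omega)
  have hyirr₂ : Irrational ((n₂:ℝ)*β) := hβ.natCast_mul (by omega)
  have key₂ := disc_eq_of_equiv hxirr₂ hyirr₂ hdet₂ hrel₂ hf2 hnt2 hprim2 hf2' hnt2' hprim2'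
  have h2a : e₂^2*(b^2-4*a*c) = e₂'^2*(b'^2-4*a'*c') := by
    linear_combination key₂ + (4*c*e₂)*he₂ + (-4*c'*e₂')*he₂'
  have he2sq : e₂^2 = e₂'^2 := by
    rw [← hDD'] at h2a
    exact mul_right_cancel₀ hD h2a
  have hasq : a^2 = a'^2 := by
    have hh : a^2 * e₂^2 = a'^2 * e₂^2 := by
      have hsame : a*e₂ = a'*e₂' := by rw [← he₂, ← he₂']
      linear_combination (a*e₂ + a'*e₂')*hsame + (a'^2)*he2sq.symm
    exact mul_right_cancel₀ (pow_ne_zero 2 he₂ne) hh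
  -- conclude P² = R²
  have ht₁sq : t₁^2 = R^2*P^2 := by
    have hh : t₁^2*(b^2-4*a*c) = R^2*P^2*(b^2-4*a*c) := by
      linear_combination -hstar + t₁^2*hDD'
    exact mul_right_cancel₀ hD hh
  have h4 : a^2*R^2*(R^2 - P^2) = 0 := by
    linear_combination (a*R^2 + t₁*a')*hstar2 + a'^2*ht₁sq + (-(R^2*P^2))*hasq
  have h5 : (R - P)*(R + P) = 0 := by
    have haR : a^2*R^2 ≠ 0 := by positivity
    have := (mul_eq_zero.mp h4).resolve_left haR
    linear_combination this
  rcases mul_eq_zero.mp h5 with h6 | h6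
  · -- P = R
    have hPR : P = R := by omega
    rw [hPR] at hbeta
    refine ⟨(-Q : ℚ)/(R:ℚ), Or.inl ?_⟩
    have hcast : (((-Q : ℚ)/(R:ℚ) : ℚ) : ℝ) = (-(Q:ℝ))/(R:ℝ) := by push_cast; ring
    rw [hcast]
    field_simp
    linear_combination -hbeta
  · -- P = -R
    have hPR : P = -R := by omega
    rw [hPR] at hbeta
    push_cast at hbeta
    refine ⟨(Q : ℚ)/(R:ℚ), Or.inr ?_⟩
    have hcast : (((Q : ℚ)/(R:ℚ) : ℚ) : ℝ) = ((Q:ℝ))/(R:ℝ) := by push_cast; ring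
    rw [hcast]
    field_simp
    linear_combination hbeta
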